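/- For any triples (a,b,c), (d,e,f) in ℋ_{f0}, there exists a group endomorphism h of ℋ_{f0} with h(0,1,0) = (a,b,c) and h(0,0,1) = (d,e,f). -/
import Mathlib


/-- The fibrewise rationalization of the discrete Heisenberg group: ℚ × ℤ × ℤ. -/
def Hf : Type := ℚ × ℤ × ℤ

namespace Hf

def mk (a : ℚ) (b c : ℤ) : Hf := (a, b, c)

@[simp] lemma fst_mk (a : ℚ) (b c : ℤ) : (mk a b c).1 = a := rfl
@[simp] lemma snd_fst_mk (a : ℚ) (b c : ℤ) : (mk a b c).2.1 = b := rfl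
@[simp] lemma snd_snd_mk (a : ℚ) (b c : ℤ) : (mk a b c).2.2 = c := rfl

lemma mk_inj {a x : ℚ} {b c y z : ℤ} : mk a b c = mk x y z ↔ a = x ∧ b = y ∧ c = z :=
  ⟨fun h => ⟨congrArg (fun p : Hf => p.1) h, congrArg (fun p : Hf => p.2.1) h,
      congrArg (fun p : Hf => p.2.2) h⟩,
   fun h => by rw [h.1, h.2.1, h.2.2]⟩

lemma eta (p : Hf) : p = mk p.1 p.2.1 p.2.2 := rfl

instance : One Hf := ⟨mk 0 0 0⟩
instance : Mul Hf :=
  ⟨fun p q => mk (p.1 + q.1 + (p.2.1 : ℚ) * (q.2.2 : ℚ)) (p.2.1 + q.2.1) (p.2.2 + q.2.2)⟩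
instance : Inv Hf :=
  ⟨fun p => mk (-p.1 + (p.2.1 : ℚ) * (p.2.2 : ℚ)) (-p.2.1) (-p.2.2)⟩

lemma mul_def (p q : Hf) :
    p * q = mk (p.1 + q.1 + (p.2.1 : ℚ) * (q.2.2 : ℚ)) (p.2.1 + q.2.1) (p.2.2 + q.2.2) := rfl
lemma one_def : (1 : Hf) = mk 0 0 0 := rfl
lemma inv_def (p : Hf) :
    p⁻¹ = mk (-p.1 + (p.2.1 : ℚ) * (p.2.2 : ℚ)) (-p.2.1) (-p.2.2) := rfl

instance instGroup : Group Hf := Group.ofLeftAxioms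
  (by intro p q r
      simp only [mul_def, fst_mk, snd_fst_mk, snd_snd_mk, mk_inj]
      refine ⟨by push_cast; ring, by ring, by ring⟩)
  (by intro p
      rw [eta p]
      simp only [mul_def, one_def, fst_mk, snd_fst_mk, snd_snd_mk, mk_inj]
      refine ⟨by push_cast; ring, by ring, by ring⟩)
  (by intro p
      simp only [mul_def, one_def, inv_def, fst_mk, snd_fst_mk, snd_snd_mk, mk_inj]
      refine ⟨by push_cast; ring, by ring, by ring⟩)

lemma mk_mul (a x : ℚ) (b c y z : ℤ) :
    mk a b c * mk x y z = mk (a + x + (b : ℚ) * (z : ℚ)) (b + y) (c + z) := by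
  simp [mul_def]

end Hf

/-- For any two target elements there is an endomorphism of ℋ_{f0} sending
(0,1,0) and (0,0,1) to them. -/
theorem hf_endo_exists (a d : ℚ) (b c e f : ℤ) :
    ∃ h : Hf →* Hf, h (Hf.mk 0 1 0) = Hf.mk a b c ∧ h (Hf.mk 0 0 1) = Hf.mk d e f := by
  refine ⟨{
    toFun := fun p => Hf.mk
      (((b : ℚ) * f - c * e) * p.1 + a * p.2.1 + d * p.2.2
        + (b : ℚ) * c * ((p.2.1 : ℚ) * (p.2.1 - 1)) / 2
        + (e : ℚ) * f * ((p.2.2 : ℚ) * (p.2.2 - 1)) / 2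
        + (c : ℚ) * e * p.2.1 * p.2.2)
      (b * p.2.1 + e * p.2.2) (c * p.2.1 + f * p.2.2)
    map_one' := by
      simp only [Hf.one_def, Hf.fst_mk, Hf.snd_fst_mk, Hf.snd_snd_mk, Hf.mk_inj]
      refine ⟨by push_cast; ring, by ring, by ring⟩
    map_mul' := fun p q => by
      simp only [Hf.mul_def, Hf.fst_mk, Hf.snd_fst_mk, Hf.snd_snd_mk, Hf.mk_inj]
      refine ⟨by push_cast; ring, by ring, by ring⟩ }, ?_, ?_⟩ <;>
  · simp only [MonoidHom.coe_mk, OneHom.coe_mk, Hf.fst_mk, Hf.snd_fst_mk, Hf.snd_snd_mk,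
      Hf.mk_inj]
    refine ⟨by push_cast; ring, by ring, by ring⟩
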